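/- If U is a subset-friendly set, A ∈ U and B ∈ U, then insert A B (the set obtained from B by adjoining A as an element) belongs to U; consequently every finite set {A₁, …, Aₙ} whose elements all lie in U belongs to U. -/

import Mathlib

/-- A set `U` is *subset-friendly* iff `∅ ∈ U`, `U` is transitive, `U` is closed under
power sets, and any two members of `U` lie in a common transitive member of `U`. -/
def ZFSet.SubsetFriendly (U : ZFSet) : Prop :=
  ∅ ∈ U ∧ U.IsTransitive ∧ (∀ Y ∈ U, ZFSet.powerset Y ∈ U) ∧
    ∀ Y ∈ U, ∀ Z ∈ U, ∃ V ∈ U, V.IsTransitive ∧ Y ∈ V ∧ Z ∈ V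

/-- If `U` is subset-friendly and `A, B ∈ U`, then `insert A B ∈ U`; consequently
every finite set `{A₁, …, Aₙ}` with all elements in `U` belongs to `U`. -/
theorem insert_mem_subsetFriendly (U : ZFSet) (hU : U.SubsetFriendly) :
    (∀ A B : ZFSet, A ∈ U → B ∈ U → insert A B ∈ U) ∧
      ∀ l : List ZFSet, (∀ A ∈ l, A ∈ U) → l.foldr insert ∅ ∈ U := by
  obtain ⟨hemp, htrans, hpow, hpair⟩ := hU
  have hins : ∀ A B : ZFSet, A ∈ U → B ∈ U → insert A B ∈ U := by
    intro A B hA hB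
    obtain ⟨V, hV, hVt, hAV, hBV⟩ := hpair A hA B hB
    have hsub : insert A B ⊆ V := by
      intro x hx
      rcases ZFSet.mem_insert_iff.mp hx with rfl | hx
      · exact hAV
      · exact hVt.subset_of_mem hBV hx
    exact htrans.subset_of_mem (hpow V hV) (ZFSet.mem_powerset.mpr hsub)
  refine ⟨hins, ?_⟩
  intro l hl
  induction l with
  | nil => exact hemp
  | cons a t ih =>
    exact hins a _ (hl a (List.mem_cons_self))
      (ih fun A hA => hl A (List.mem_cons_of_mem a hA))
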